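/- Let J : ℝ^d → ℝ be L₂-smooth and (α, β)-weak-gradient-dominated, with maximum J*. Let Φ have mean 0 and E[‖ε‖₂²] ≤ d σ², and set J_P(θ) = E_{ε∼Φ}[J(θ + ε)]. If additionally J is L_J-Lipschitz, then J_P satisfies weak gradient domination with respect to its own optimum: sup_θ J_P(θ) - J_P(θ) ≤ α ‖∇J_P(θ)‖₂ + β + (α L₂ + L_J) σ √d for every θ. -/

import Mathlib

open MeasureTheory

/-- If `J` is `L_J`-Lipschitz, `L₂`-smooth and `(α,β)`-weak-gradient-dominated, then the
smoothed objective `J_P(θ) = E_{ε∼Φ}[J(θ+ε)]` (zero-mean noise with `E[‖ε‖²] ≤ d σ²`)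
satisfies weak gradient domination with respect to its own supremum:
`sup J_P - J_P(θ) ≤ α ‖∇J_P(θ)‖ + β + (α L₂ + L_J) σ √d`. -/
theorem stmt_12 (d : ℕ) (α β L₂ LJ σ Jstar : ℝ) (hα : 0 < α) (hβ : 0 ≤ β)
    (hL₂ : 0 ≤ L₂) (hLJ : 0 ≤ LJ) (hσ : 0 < σ)
    (J JP : EuclideanSpace ℝ (Fin d) → ℝ)
    (hJ : ContDiff ℝ 2 J)
    (hsup : ∀ θ, J θ ≤ Jstar)
    (hwgd : ∀ θ, Jstar - J θ ≤ α * ‖gradient J θ‖ + β)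
    (hLip : ∀ θ θ' : EuclideanSpace ℝ (Fin d), |J θ - J θ'| ≤ LJ * ‖θ - θ'‖)
    (hsmooth : ∀ θ θ' : EuclideanSpace ℝ (Fin d),
      ‖gradient J θ - gradient J θ'‖ ≤ L₂ * ‖θ - θ'‖)
    (Φ : Measure (EuclideanSpace ℝ (Fin d))) [IsProbabilityMeasure Φ]
    (hmean : (∫ ε, ε ∂Φ) = 0)
    (hint2 : Integrable (fun ε => ‖ε‖ ^ 2) Φ)
    (hvar : (∫ ε, ‖ε‖ ^ 2 ∂Φ) ≤ (d : ℝ) * σ ^ 2)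
    (hintJ : ∀ θ, Integrable (fun ε => J (θ + ε)) Φ)
    (hintg : ∀ θ, Integrable (fun ε => gradient J (θ + ε)) Φ)
    (hJP : ∀ θ, JP θ = ∫ ε, J (θ + ε) ∂Φ)
    (hgradJP : ∀ θ, gradient JP θ = ∫ ε, gradient J (θ + ε) ∂Φ) :
    ∀ θ : EuclideanSpace ℝ (Fin d),
      (⨆ θ' : EuclideanSpace ℝ (Fin d), JP θ') - JP θ
        ≤ α * ‖gradient JP θ‖ + β + (α * L₂ + LJ) * σ * Real.sqrt d := by
  intro θ
  -- integrability of the norm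
  have hnormInt : Integrable (fun ε : EuclideanSpace ℝ (Fin d) => ‖ε‖) Φ := by
    refine (hint2.add (integrable_const 1)).mono'
      continuous_norm.aestronglyMeasurable ?_
    filter_upwards with ε
    have h0 : (0 : ℝ) ≤ ‖ε‖ := norm_nonneg _
    simp only [Pi.add_apply, Real.norm_eq_abs, abs_of_nonneg h0]
    nlinarith [sq_nonneg (‖ε‖ - 1)]
  set m : ℝ := ∫ ε, ‖ε‖ ∂Φ with hm_def
  have hm0 : 0 ≤ m := integral_nonneg fun ε => norm_nonneg _
  -- Cauchy–Schwarz / variance trick: m² ≤ ∫‖ε‖²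
  have hmsq : m ^ 2 ≤ ∫ ε, ‖ε‖ ^ 2 ∂Φ := by
    have h0 : (0 : ℝ) ≤ ∫ ε, (‖ε‖ - m) ^ 2 ∂Φ :=
      integral_nonneg fun ε => sq_nonneg _
    have heq : ∫ ε, (‖ε‖ - m) ^ 2 ∂Φ = (∫ ε, ‖ε‖ ^ 2 ∂Φ) - m ^ 2 := by
      have hrw : (fun ε : EuclideanSpace ℝ (Fin d) => (‖ε‖ - m) ^ 2)
          = fun ε => (‖ε‖ ^ 2 - (2 * m) * ‖ε‖) + m ^ 2 := by
        funext ε; ring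
      have hi1 : Integrable (fun ε : EuclideanSpace ℝ (Fin d) =>
          ‖ε‖ ^ 2 - (2 * m) * ‖ε‖) Φ := hint2.sub (hnormInt.const_mul _)
      rw [hrw, integral_add hi1 (integrable_const _),
        integral_sub hint2 (hnormInt.const_mul _), integral_const_mul, integral_const]
      simp only [measure_univ, probReal_univ, ENNReal.toReal_one, one_smul, smul_eq_mul, ← hm_def]
      ring
    linarith
  -- m ≤ σ √d
  have hsd : 0 ≤ Real.sqrt d := Real.sqrt_nonneg _
  have hsd2 : Real.sqrt d ^ 2 = (d : ℝ) := Real.sq_sqrt (Nat.cast_nonneg d)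
  have hm : m ≤ σ * Real.sqrt d := by
    nlinarith [hvar, mul_nonneg hσ.le hsd]
  -- |J θ' - JP θ'| ≤ LJ * m for every θ'
  have hJdiff : ∀ θ' : EuclideanSpace ℝ (Fin d), |J θ' - JP θ'| ≤ LJ * m := by
    intro θ'
    have h1 : J θ' - JP θ' = ∫ ε, (J θ' - J (θ' + ε)) ∂Φ := by
      rw [hJP, integral_sub (integrable_const _) (hintJ θ'), integral_const]
      simp
    calc |J θ' - JP θ'| = ‖∫ ε, (J θ' - J (θ' + ε)) ∂Φ‖ := by
          rw [h1, Real.norm_eq_abs]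
      _ ≤ ∫ ε, ‖J θ' - J (θ' + ε)‖ ∂Φ := norm_integral_le_integral_norm _
      _ ≤ ∫ ε, LJ * ‖ε‖ ∂Φ := by
          refine integral_mono ((integrable_const (J θ')).sub (hintJ θ')).norm
            (hnormInt.const_mul _) fun ε => ?_
          have := hLip θ' (θ' + ε)
          simpa [Real.norm_eq_abs] using this
      _ = LJ * m := by rw [integral_const_mul]
  -- gradient difference
  have hgdiff : ‖gradient JP θ - gradient J θ‖ ≤ L₂ * m := by
    have h1 : gradient JP θ - gradient J θ
        = ∫ ε, (gradient J (θ + ε) - gradient J θ) ∂Φ := by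
      rw [hgradJP, integral_sub (hintg θ) (integrable_const _), integral_const]
      simp
    rw [h1]
    calc ‖∫ ε, (gradient J (θ + ε) - gradient J θ) ∂Φ‖
        ≤ ∫ ε, ‖gradient J (θ + ε) - gradient J θ‖ ∂Φ := norm_integral_le_integral_norm _
      _ ≤ ∫ ε, L₂ * ‖ε‖ ∂Φ := by
          refine integral_mono ((hintg θ).sub (integrable_const _)).norm
            (hnormInt.const_mul _) fun ε => ?_
          have := hsmooth (θ + ε) θ
          simpa using this
      _ = L₂ * m := by rw [integral_const_mul]
  -- sup JP ≤ Jstar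
  have hsupJP : (⨆ θ' : EuclideanSpace ℝ (Fin d), JP θ') ≤ Jstar := by
    refine ciSup_le fun θ' => ?_
    rw [hJP]
    calc (∫ ε, J (θ' + ε) ∂Φ) ≤ ∫ _, Jstar ∂Φ :=
          integral_mono (hintJ θ') (integrable_const _) fun ε => hsup _
      _ = Jstar := by simp
  -- combine
  have h1 := hwgd θ
  have h2 : ‖gradient J θ‖ ≤ ‖gradient JP θ‖ + L₂ * m := by
    have := norm_sub_norm_le (gradient JP θ) (gradient J θ)
    linarith [abs_le.mp (abs_norm_sub_norm_le (gradient JP θ) (gradient J θ))]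
  have h3 : J θ - JP θ ≤ LJ * m := le_trans (le_abs_self _) (hJdiff θ)
  have h4 : α * L₂ * m ≤ α * L₂ * (σ * Real.sqrt d) :=
    mul_le_mul_of_nonneg_left hm (mul_nonneg hα.le hL₂)
  have h5 : LJ * m ≤ LJ * (σ * Real.sqrt d) := mul_le_mul_of_nonneg_left hm hLJ
  have h6 : α * ‖gradient J θ‖ ≤ α * (‖gradient JP θ‖ + L₂ * m) :=
    mul_le_mul_of_nonneg_left h2 hα.le
  nlinarith
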